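/- Let Cay²(A;G;B) be a λ-expander left/right Cayley complex with |A| = |B| = r, and C₁ ≤ F_2^r a code with δ(C₁) > λ. Then the left/right Cayley expander code C[G,A,B,C₁] has normalized distance at least (1/4)·δ(C₁)²·(δ(C₁) − λ). -/

import Mathlib

open Finset

/-- The square `[a,g,b]` of the left/right Cayley complex, as the set of its four
(representative) triples. -/
def cSquare {G : Type*} [Group G] [DecidableEq G] (a g b : G) : Finset (G × G × G) :=
  {(a, g, b), (a⁻¹, a * g, b), (a⁻¹, a * g * b, b⁻¹), (a, g * b, b⁻¹)}

lemma mem_cSquare_self {G : Type*} [Group G] [DecidableEq G] (a g b : G) :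
    (a, g, b) ∈ cSquare a g b := by simp [cSquare]

lemma cSquare_card_le {G : Type*} [Group G] [DecidableEq G] (a g b : G) :
    (cSquare a g b).card ≤ 4 := by
  simp only [cSquare]
  refine le_trans (Finset.card_insert_le _ _) (Nat.succ_le_succ ?_)
  refine le_trans (Finset.card_insert_le _ _) (Nat.succ_le_succ ?_)
  refine le_trans (Finset.card_insert_le _ _) (Nat.succ_le_succ ?_)
  simp

lemma cSquare_flipA {G : Type*} [Group G] [DecidableEq G] (a g b : G) :
    cSquare a⁻¹ (a * g) b = cSquare a g b := by
  ext x
  simp only [cSquare, Finset.mem_insert, Finset.mem_singleton, inv_inv,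
    inv_mul_cancel_left]
  constructor <;> rintro (h|h|h|h) <;> simp [h, mul_assoc]

lemma filter_card_equiv {α β : Type*} [Fintype α] [Fintype β] [DecidableEq α] [DecidableEq β]
    (e : α ≃ β) (p : α → Prop) [DecidablePred p] :
    (univ.filter fun b => p (e.symm b)).card = (univ.filter p).card := by
  apply Finset.card_bij (fun b _ => e.symm b)
  · intro b hb; simp only [Finset.mem_filter, Finset.mem_univ, true_and] at hb ⊢; exact hb
  · intro b1 _ b2 _ h; exact e.symm.injective h
  · intro a ha; exact ⟨e a, by simpa using (Finset.mem_filter.mp ha).2, by simp⟩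

lemma mixlem {G : Type*} [Group G] [Fintype G] [DecidableEq G]
    (A : Finset G) (r : ℕ) (hcA : A.card = r) (lam : ℝ)
    (hexpA : ∀ h : G → ℝ, ∑ g, h g = 0 →
      ∑ g, h g * ∑ a ∈ A, h (a * g) ≤ lam * r * ∑ g, h g ^ 2)
    (S : Finset G) :
    ∑ g, (if g ∈ S then (1:ℝ) else 0) * ∑ a ∈ A, (if a * g ∈ S then (1:ℝ) else 0)
      ≤ r * (S.card : ℝ)^2 / (Fintype.card G : ℝ)
        + lam * r * ((S.card : ℝ) - (S.card : ℝ)^2 / (Fintype.card G : ℝ)) := by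
  set n : ℕ := Fintype.card G with hn
  have hn0 : 0 < n := Fintype.card_pos
  have hnR : (0:ℝ) < (n:ℝ) := by exact_mod_cast hn0
  set χ : G → ℝ := fun g => if g ∈ S then (1:ℝ) else 0 with hχ
  set m : ℝ := (S.card : ℝ) with hm
  set c : ℝ := m / n with hc
  set h : G → ℝ := fun g => χ g - c with hh
  have hχsum : ∑ g, χ g = m := by
    simp [hχ, hm, Finset.sum_ite_mem, Finset.univ_inter]
  have hP : ∀ a : G, ∑ g, χ (a * g) = m := by
    intro a
    rw [← hχsum]
    exact Fintype.sum_equiv (Equiv.mulLeft a) _ _ (fun g => rfl)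
  have hsum0 : ∑ g, h g = 0 := by
    simp only [hh, Finset.sum_sub_distrib, hχsum, Finset.sum_const, Finset.card_univ,
      nsmul_eq_mul, ← hn]
    rw [hc]; field_simp; ring
  have key := hexpA h hsum0
  have e1 : ∀ g, ∑ a ∈ A, h (a * g) = (∑ a ∈ A, χ (a * g)) - r * c := by
    intro g
    simp [hh, Finset.sum_sub_distrib, hcA, mul_comm]
  have ePsum : ∑ g, ∑ a ∈ A, χ (a * g) = r * m := by
    rw [Finset.sum_comm]
    simp [hP, hcA, mul_comm]
  have e2 : ∑ g, h g * ∑ a ∈ A, h (a * g)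
      = (∑ g, χ g * ∑ a ∈ A, χ (a * g)) - r * m^2 / n := by
    have expand : ∀ g, h g * ∑ a ∈ A, h (a * g)
        = χ g * ∑ a ∈ A, χ (a * g) - c * (∑ a ∈ A, χ (a * g)) - (r * c) * χ g + c * (r * c) := by
      intro g; rw [e1]; simp only [hh]; ring
    rw [Finset.sum_congr rfl (fun g _ => expand g)]
    simp only [Finset.sum_add_distrib, Finset.sum_sub_distrib, ← Finset.mul_sum, hχsum, ePsum,
      Finset.sum_const, Finset.card_univ, nsmul_eq_mul, ← hn]
    rw [hc]; field_simp
    ring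
  have e3 : ∑ g, h g ^ 2 = m - m^2 / n := by
    have expand : ∀ g, h g ^ 2 = χ g - 2 * c * χ g + c^2 := by
      intro g
      have hsq : χ g ^ 2 = χ g := by
        simp only [hχ]; split <;> norm_num
      simp only [hh]
      ring_nf
      nlinarith [hsq]
    rw [Finset.sum_congr rfl (fun g _ => expand g)]
    simp only [Finset.sum_add_distrib, Finset.sum_sub_distrib, ← Finset.mul_sum, hχsum,
      Finset.sum_const, Finset.card_univ, nsmul_eq_mul, ← hn]
    rw [hc]; field_simp
    ring
  rw [e2, e3] at key
  linarith

lemma arith_degen (δ1 lam N W nn : ℝ) (hgt : lam < δ1) (hδneg : δ1 ≤ 0)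
    (hn2 : 2 ≤ nn) (hN : N ≤ (nn - 1)^2 * nn / 2) (hN0 : 0 ≤ N) (hW : 1 ≤ W)
    (hxb : -lam * (nn - 1) ≤ 1) :
    (1/4) * δ1^2 * (δ1 - lam) * N ≤ W := by
  obtain ⟨x, hx⟩ : ∃ x : ℝ, x = -lam := ⟨-lam, rfl⟩
  obtain ⟨y, hy⟩ : ∃ y : ℝ, y = x * (nn - 1) := ⟨_, rfl⟩
  have hx0 : 0 < x := by rw [hx]; nlinarith
  have hd : 0 < δ1 - lam := by linarith
  have hb1 : δ1^2 ≤ x^2 := by rw [hx]; nlinarith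
  have hb2 : δ1 - lam ≤ x := by rw [hx]; linarith
  have e1 : δ1^2 * (δ1 - lam) ≤ x^2 * x := by nlinarith
  have hy0 : 0 < y := by rw [hy]; exact mul_pos hx0 (by linarith)
  have hy1 : y ≤ 1 := by rw [hy, hx]; exact hxb
  have hy3 : y^3 ≤ 1 := pow_le_one₀ (le_of_lt hy0) hy1
  have hnn : nn ≤ 2 * (nn - 1) := by linarith
  have e2 : x^3 * (nn - 1)^2 * nn ≤ 2 := by
    have h1 : x^3 * (nn - 1)^2 * nn ≤ x^3 * (nn - 1)^2 * (2 * (nn - 1)) := by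
      have h0 : 0 ≤ x^3 * (nn - 1)^2 := by positivity
      nlinarith
    have h2 : x^3 * (nn - 1)^2 * (2 * (nn - 1)) = 2 * y^3 := by rw [hy]; ring
    linarith
  calc (1/4) * δ1^2 * (δ1 - lam) * N ≤ (1/4) * (x^2 * x) * N := by
        nlinarith [mul_nonneg (sub_nonneg.mpr e1) hN0]
    _ ≤ (1/4) * (x^2 * x) * ((nn - 1)^2 * nn / 2) := by
        have h0 : 0 ≤ x^2 * x := by positivity
        nlinarith [mul_nonneg h0 (sub_nonneg.mpr hN)]
    _ = (x^3 * (nn - 1)^2 * nn) / 8 := by ring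
    _ ≤ 1/4 := by linarith
    _ ≤ W := by linarith

lemma arith_main (δ1 lam N W nn rr : ℝ) (hgt : lam < δ1) (hδpos : 0 < δ1)
    (hN : 2 * N ≤ rr * (nn * rr)) (hN0 : 0 ≤ N)
    (hW : δ1 * rr * (δ1 * rr * ((δ1 - lam) * nn / 2)) ≤ 4 * W) :
    (1/4) * δ1^2 * (δ1 - lam) * N ≤ W := by
  have hd : 0 < δ1 - lam := by linarith
  have h1 : (1/4) * δ1^2 * (δ1 - lam) * N ≤ (1/4) * δ1^2 * (δ1 - lam) * (rr * (nn * rr) / 2) := by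
    have hc : 0 ≤ (1/4) * δ1^2 * (δ1 - lam) := by positivity
    nlinarith [mul_nonneg hc (by linarith : (0:ℝ) ≤ rr * (nn * rr) / 2 - N)]
  have h2 : (1/4) * δ1^2 * (δ1 - lam) * (rr * (nn * rr) / 2)
      = (δ1 * rr * (δ1 * rr * ((δ1 - lam) * nn / 2))) / 4 := by ring
  linarith

lemma arith_sb (δ1 lam rr m nnR : ℝ) (hm : 0 < m) (hr : 0 < rr) (hn : 0 < nnR)
    (hlam1 : -1 ≤ lam)
    (key : δ1 * rr * m ≤ rr * m^2 / nnR + lam * rr * (m - m^2 / nnR)) :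
    (δ1 - lam) * nnR / 2 ≤ m := by
  have h1 : δ1 ≤ m / nnR + lam * (1 - m / nnR) := by
    have h2 : rr * m * (δ1 - (m / nnR + lam * (1 - m / nnR))) ≤ 0 := by
      have e : rr * m * (δ1 - (m / nnR + lam * (1 - m / nnR)))
          = δ1 * rr * m - (rr * m^2 / nnR + lam * rr * (m - m^2 / nnR)) := by
        field_simp
      rw [e]
      linarith
    by_contra hcon
    push_neg at hcon
    have := mul_pos (mul_pos hr hm) (sub_pos.mpr hcon)
    linarith
  have hs0 : 0 ≤ m / nnR := by positivity
  have h5 : δ1 - lam ≤ 2 * (m / nnR) := by nlinarith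
  have h6 : (δ1 - lam) * nnR ≤ 2 * (m / nnR) * nnR :=
    mul_le_mul_of_nonneg_right h5 (le_of_lt hn)
  have h7 : 2 * (m / nnR) * nnR = 2 * m := by field_simp
  linarith

set_option maxHeartbeats 1600000 in
/-- **Distance of left/right Cayley expander codes:**
`δ(C[G,A,B,C₁]) ≥ (1/4)·δ(C₁)²·(δ(C₁) − λ)`.  Codewords are modeled as invariant
functions `f : A × G × B → F₂` with every edge view in `C₁`; the weight of `f` is the
number of squares on which it is nonzero, and the block length is the number of
squares. -/
theorem stmt11 {G : Type*} [Group G] [Fintype G] [DecidableEq G]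
    (A B : Finset G) (r : ℕ) (hcA : A.card = r) (hcB : B.card = r)
    (hAsym : ∀ a ∈ A, a⁻¹ ∈ A) (hBsym : ∀ b ∈ B, b⁻¹ ∈ B)
    (h1A : (1 : G) ∉ A) (h1B : (1 : G) ∉ B)
    (lam : ℝ)
    (hexpA : ∀ h : G → ℝ, ∑ g, h g = 0 →
      ∑ g, h g * ∑ a ∈ A, h (a * g) ≤ lam * r * ∑ g, h g ^ 2)
    (hexpB : ∀ h : G → ℝ, ∑ g, h g = 0 →
      ∑ g, h g * ∑ b ∈ B, h (g * b) ≤ lam * r * ∑ g, h g ^ 2)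
    (ea : ↥A ≃ Fin r) (eb : ↥B ≃ Fin r)
    (invA : ↥A ≃ ↥A) (hinvA : ∀ a : ↥A, ((invA a : G)) = (a : G)⁻¹)
    (invB : ↥B ≃ ↥B) (hinvB : ∀ b : ↥B, ((invB b : G)) = (b : G)⁻¹)
    (C1 : Submodule (ZMod 2) (Fin r → ZMod 2))
    (δ1 : ℝ) (hδ1 : ∀ w : Fin r → ZMod 2, w ∈ C1 → w ≠ 0 →
      δ1 * r ≤ ((univ.filter fun i : Fin r => w i ≠ 0).card : ℝ))
    (hgt : lam < δ1)
    (C : Submodule (ZMod 2) (↥A × G × ↥B → ZMod 2))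
    (hC : ∀ f : ↥A × G × ↥B → ZMod 2, f ∈ C ↔
      ((∀ (a : ↥A) (g : G) (b : ↥B),
          f (a, g, b) = f (invA a, (a : G) * g, b) ∧
          f (a, g, b) = f (a, g * (b : G), invB b)) ∧
       ((∀ (a : ↥A) (g : G), (fun i : Fin r => f (a, g, eb.symm i)) ∈ C1) ∧
        (∀ (g : G) (b : ↥B), (fun i : Fin r => f (ea.symm i, g, b)) ∈ C1)))) :
    ∀ f : ↥A × G × ↥B → ZMod 2, f ∈ C → f ≠ 0 →
      (1 / 4) * δ1 ^ 2 * (δ1 - lam) *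
          ((((A ×ˢ (univ : Finset G) ×ˢ B).image fun t =>
              cSquare t.1 t.2.1 t.2.2)).card : ℝ)
        ≤ (((((A ×ˢ (univ : Finset G) ×ˢ B).image fun t =>
              cSquare t.1 t.2.1 t.2.2)).filter fun s =>
            ∃ t : ↥A × G × ↥B, ((t.1 : G), t.2.1, (t.2.2 : G)) ∈ s ∧ f t ≠ 0).card : ℝ) := by
  classical
  intro f hfC hf0
  obtain ⟨hfinv, hviewB, hviewA⟩ := (hC f).mp hfC
  obtain ⟨t0, ht0⟩ := Function.ne_iff.mp hf0
  obtain ⟨a0, g0, b0⟩ := t0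
  set n : ℕ := Fintype.card G with hn
  have hr0 : 0 < r := hcA ▸ Finset.card_pos.mpr ⟨(a0 : G), a0.2⟩
  have hrR : (0:ℝ) < (r:ℝ) := by exact_mod_cast hr0
  have hn2 : 2 ≤ n := by
    have h1 : (a0 : G) ≠ 1 := fun h => h1A (h ▸ a0.2)
    have := Fintype.one_lt_card_iff.mpr ⟨(a0 : G), 1, h1⟩
    omega
  have hnR : (2:ℝ) ≤ (n:ℝ) := by exact_mod_cast hn2
  have hnR0 : (0:ℝ) < (n:ℝ) := by linarith
  have hrn : r ≤ n - 1 := by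
    have hsub : A ⊆ Finset.univ.erase 1 := fun x hx =>
      Finset.mem_erase.mpr ⟨fun h => h1A (h ▸ hx), Finset.mem_univ x⟩
    have := Finset.card_le_card hsub
    rw [hcA, Finset.card_erase_of_mem (Finset.mem_univ 1), Finset.card_univ] at this
    omega
  have hmix : ∀ S : Finset G,
      ∑ g, (if g ∈ S then (1:ℝ) else 0) * ∑ a ∈ A, (if a * g ∈ S then (1:ℝ) else 0)
      ≤ r * (S.card : ℝ)^2 / (n : ℝ)
        + lam * r * ((S.card : ℝ) - (S.card : ℝ)^2 / (n : ℝ)) :=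
    fun S => mixlem A r hcA lam hexpA S
  -- lam * (n-1) ≥ -1
  have hlam : (-1 : ℝ) ≤ lam * ((n:ℝ) - 1) := by
    have key := hmix {1}
    have hQ : (0:ℝ) ≤ ∑ g, (if g ∈ ({1} : Finset G) then (1:ℝ) else 0)
        * ∑ a ∈ A, (if a * g ∈ ({1} : Finset G) then (1:ℝ) else 0) := by
      apply Finset.sum_nonneg
      intro g _
      apply mul_nonneg
      · split <;> norm_num
      · apply Finset.sum_nonneg; intro a _; split <;> norm_num
    simp only [Finset.card_singleton, Nat.cast_one, one_pow] at key
    have h2 : (0:ℝ) ≤ r * 1 / n + lam * r * (1 - 1 / n) := le_trans hQ key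
    have h3 := mul_le_mul_of_nonneg_left h2 (le_of_lt (by positivity : (0:ℝ) < (n:ℝ)/r))
    rw [mul_zero] at h3
    have hexp : (n:ℝ)/r * (r * 1 / n + lam * r * (1 - 1/n)) = 1 + lam * ((n:ℝ) - 1) := by
      field_simp
    rw [hexp] at h3
    linarith
  have hlam1 : (-1 : ℝ) ≤ lam := by nlinarith
  -- global notation
  set D := A ×ˢ (univ : Finset G) ×ˢ B with hD
  set φ : G × G × G → Finset (G × G × G) := fun t => cSquare t.1 t.2.1 t.2.2 with hφ
  set ψ : ↥A × G × ↥B → G × G × G := fun t => ((t.1 : G), t.2.1, (t.2.2 : G)) with hψ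
  set NT := univ.filter fun t : ↥A × G × ↥B => f t ≠ 0 with hNT
  set FS := (D.image φ).filter (fun s =>
      ∃ t : ↥A × G × ↥B, ((t.1 : G), t.2.1, (t.2.2 : G)) ∈ s ∧ f t ≠ 0) with hFS
  have hDcard : D.card = r * (n * r) := by
    rw [hD, Finset.card_product, Finset.card_product, hcA, hcB, Finset.card_univ]
  -- P1 : each square has at least two representative triples
  have hP1 : 2 * (D.image φ).card ≤ r * (n * r) := by
    rw [← hDcard]
    calc 2 * (D.image φ).card = ∑ s ∈ D.image φ, 2 := by
          rw [Finset.sum_const, smul_eq_mul, mul_comm]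
      _ ≤ ∑ s ∈ D.image φ, (D.filter fun t => φ t = s).card := ?_
      _ = D.card := (Finset.card_eq_sum_card_image φ D).symm
    apply Finset.sum_le_sum
    intro s hs
    obtain ⟨t, htD, hts⟩ := Finset.mem_image.mp hs
    obtain ⟨a, g, b⟩ := t
    simp only [hD, Finset.mem_product] at htD
    obtain ⟨haA, -, hbB⟩ := htD
    have ht'D : (a⁻¹, a * g, b) ∈ D := by
      simp only [hD, Finset.mem_product]
      exact ⟨hAsym a haA, Finset.mem_univ _, hbB⟩
    have hφt' : φ (a⁻¹, a * g, b) = s := by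
      simp only [hφ] at hts ⊢
      simpa [cSquare_flipA] using hts
    have hne : (a, g, b) ≠ (a⁻¹, a * g, b) := by
      intro h
      rw [Prod.ext_iff, Prod.ext_iff] at h
      have h2 : a * g = g := h.2.1.symm
      have : a = 1 := mul_eq_right.mp h2
      exact h1A (this ▸ haA)
    have hsub : ({(a,g,b), (a⁻¹, a * g, b)} : Finset (G × G × G)) ⊆ D.filter (fun x => φ x = s) := by
      intro x hx
      simp only [Finset.mem_insert, Finset.mem_singleton] at hx
      rcases hx with rfl | rfl
      · exact Finset.mem_filter.mpr ⟨by simp [hD, Finset.mem_product, haA, hbB], hts⟩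
      · exact Finset.mem_filter.mpr ⟨ht'D, hφt'⟩
    calc 2 = ({(a,g,b), (a⁻¹, a * g, b)} : Finset (G × G × G)).card := (Finset.card_pair hne).symm
      _ ≤ _ := Finset.card_le_card hsub
  -- P2 : nonzero triples ≤ 4 * nonzero squares
  have hψinj : Function.Injective ψ := by
    rintro ⟨a1, g1, b1⟩ ⟨a2, g2, b2⟩ h
    simp only [hψ, Prod.ext_iff] at h
    obtain ⟨h1, h2, h3⟩ := h
    exact Prod.ext (Subtype.ext h1) (Prod.ext h2 (Subtype.ext h3))
  have hP2 : NT.card ≤ 4 * FS.card := by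
    have himg : NT.image (φ ∘ ψ) ⊆ FS := by
      intro s hs
      obtain ⟨t, htNT, hts⟩ := Finset.mem_image.mp hs
      have hft : f t ≠ 0 := by
        have := Finset.mem_filter.mp htNT
        exact this.2
      apply Finset.mem_filter.mpr
      constructor
      · apply Finset.mem_image.mpr
        refine ⟨ψ t, ?_, hts⟩
        simp only [hψ, hD, Finset.mem_product]
        exact ⟨t.1.2, Finset.mem_univ _, t.2.2.2⟩
      · exact ⟨t, hts ▸ mem_cSquare_self _ _ _, hft⟩
    have hfib : ∀ s ∈ NT.image (φ ∘ ψ), (NT.filter fun t => (φ ∘ ψ) t = s).card ≤ 4 := by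
      intro s hs
      obtain ⟨t0', _, ht0'⟩ := Finset.mem_image.mp hs
      have hcard_s : s.card ≤ 4 := ht0' ▸ cSquare_card_le _ _ _
      have heq : (NT.filter fun t => (φ ∘ ψ) t = s).card
          = ((NT.filter fun t => (φ ∘ ψ) t = s).image ψ).card :=
        (Finset.card_image_of_injective _ hψinj).symm
      rw [heq]
      refine le_trans (Finset.card_le_card ?_) hcard_s
      intro x hx
      obtain ⟨t, ht, rfl⟩ := Finset.mem_image.mp hx
      have := (Finset.mem_filter.mp ht).2
      exact this ▸ mem_cSquare_self _ _ _
    calc NT.card = ∑ s ∈ NT.image (φ ∘ ψ), (NT.filter fun t => (φ ∘ ψ) t = s).card :=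
          Finset.card_eq_sum_card_image (φ ∘ ψ) NT
      _ ≤ ∑ s ∈ NT.image (φ ∘ ψ), 4 := Finset.sum_le_sum hfib
      _ = (NT.image (φ ∘ ψ)).card * 4 := by rw [Finset.sum_const, smul_eq_mul]
      _ ≤ FS.card * 4 := Nat.mul_le_mul_right _ (Finset.card_le_card himg)
      _ = 4 * FS.card := mul_comm _ _
  have hFS1 : 1 ≤ FS.card := by
    have hm : φ ((a0:G), g0, (b0:G)) ∈ FS := by
      apply Finset.mem_filter.mpr
      constructor
      · exact Finset.mem_image.mpr ⟨((a0:G), g0, (b0:G)),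
          Finset.mem_product.mpr ⟨a0.2, Finset.mem_product.mpr ⟨Finset.mem_univ _, b0.2⟩⟩, rfl⟩
      · exact ⟨(a0, g0, b0), mem_cSquare_self _ _ _, ht0⟩
    exact Finset.card_pos.mpr ⟨_, hm⟩
  -- local counts
  set c : ↥B → G → ℕ := fun b g => (univ.filter fun a : ↥A => f (a, g, b) ≠ 0).card with hc
  set Sb : ↥B → Finset G := fun b => univ.filter fun g => ∃ a : ↥A, f (a, g, b) ≠ 0 with hSb
  have hSbmem : ∀ (b : ↥B) (g : G), g ∈ Sb b ↔ ∃ a : ↥A, f (a, g, b) ≠ 0 := by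
    intro b g
    simp [hSb]
  have hNTsum : NT.card = ∑ b : ↥B, ∑ g : G, c b g := by
    have hcf : ∀ (b : ↥B) (g : G), c b g = ∑ a : ↥A, if f (a, g, b) ≠ 0 then 1 else 0 :=
      fun b g => Finset.card_filter _ _
    calc NT.card = ∑ t : ↥A × G × ↥B, if f t ≠ 0 then 1 else 0 := Finset.card_filter _ _
      _ = ∑ a : ↥A, ∑ g : G, ∑ b : ↥B, (if f (a, g, b) ≠ 0 then 1 else 0) := by
          simp only [Fintype.sum_prod_type]
      _ = ∑ b : ↥B, ∑ g : G, ∑ a : ↥A, (if f (a, g, b) ≠ 0 then 1 else 0) := by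
          conv_lhs => rw [Finset.sum_comm]
          conv_rhs => rw [Finset.sum_comm]
          exact Finset.sum_congr rfl fun g _ => Finset.sum_comm
      _ = ∑ b : ↥B, ∑ g : G, c b g := by
          exact Finset.sum_congr rfl fun b _ => Finset.sum_congr rfl fun g _ => (hcf b g).symm
  -- lower bound on views
  have hcview : ∀ (b : ↥B) (g : G), g ∈ Sb b → δ1 * r ≤ (c b g : ℝ) := by
    intro b g hg
    have hw : (fun i : Fin r => f (ea.symm i, g, b)) ∈ C1 := hviewA g b
    have hwne : (fun i : Fin r => f (ea.symm i, g, b)) ≠ 0 := by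
      obtain ⟨a, ha⟩ := (hSbmem b g).mp hg
      intro hcon
      apply ha
      have := congrFun hcon (ea a)
      simpa using this
    have hb := hδ1 _ hw hwne
    have hcards : (univ.filter fun i : Fin r => f (ea.symm i, g, b) ≠ 0).card = c b g :=
      filter_card_equiv ea (fun a : ↥A => f (a, g, b) ≠ 0)
    rw [hcards] at hb
    exact hb
  -- upper bound pointwise
  have hcup : ∀ (b : ↥B) (g : G), (c b g : ℝ) ≤
      (if g ∈ Sb b then (1:ℝ) else 0) * ∑ a ∈ A, (if a * g ∈ Sb b then (1:ℝ) else 0) := by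
    intro b g
    by_cases hg : g ∈ Sb b
    · rw [if_pos hg, one_mul]
      have hsub : (univ.filter fun a : ↥A => f (a, g, b) ≠ 0)
          ⊆ (univ.filter fun a : ↥A => (a : G) * g ∈ Sb b) := by
        intro a ha
        have hfa : f (a, g, b) ≠ 0 := (Finset.mem_filter.mp ha).2
        apply Finset.mem_filter.mpr
        refine ⟨Finset.mem_univ _, ?_⟩
        apply (hSbmem b ((a:G) * g)).mpr
        refine ⟨invA a, ?_⟩
        rw [← (hfinv a g b).1]
        exact hfa
      have h1 : c b g ≤ (univ.filter fun a : ↥A => (a:G) * g ∈ Sb b).card :=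
        Finset.card_le_card hsub
      have h2 : ((univ.filter fun a : ↥A => (a:G) * g ∈ Sb b).card : ℝ)
          = ∑ a ∈ A, (if a * g ∈ Sb b then (1:ℝ) else 0) := by
        rw [← Finset.sum_coe_sort A (fun a => if a * g ∈ Sb b then (1:ℝ) else 0)]
        rw [Finset.card_filter]
        push_cast
        apply Finset.sum_congr rfl
        intro a _
        by_cases h : (a:G) * g ∈ Sb b <;> simp [h]
      rw [← h2]
      exact_mod_cast h1
    · rw [if_neg hg, zero_mul]
      have : c b g = 0 := by
        rw [hc]
        rw [Finset.card_eq_zero, Finset.filter_eq_empty_iff]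
        intro a _
        intro hfa
        exact hg ((hSbmem b g).mpr ⟨a, hfa⟩)
      simp [this]
  -- make everything opaque to avoid unfolding blowups
  clear_value c Sb NT FS D φ ψ
  -- conclude
  rcases le_or_gt δ1 0 with hδneg | hδpos
  · -- degenerate case
    apply arith_degen _ _ _ _ (n:ℝ) hgt hδneg hnR _ (Nat.cast_nonneg _) _ _
    · -- squares bound
      have h1 : ((2 * (D.image φ).card : ℕ) : ℝ) ≤ ((r * (n * r) : ℕ) : ℝ) := by exact_mod_cast hP1
      push_cast at h1
      have h2 : (r:ℝ) ≤ (n:ℝ) - 1 := by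
        have h3 : (r:ℝ) ≤ ((n - 1 : ℕ) : ℝ) := by exact_mod_cast hrn
        have h4 : ((n - 1 : ℕ) : ℝ) = (n:ℝ) - 1 := by
          have : 1 ≤ n := by omega
          push_cast [this]
          ring
        linarith
      have hr2 : (r:ℝ)^2 ≤ ((n:ℝ)-1)^2 := by
        apply pow_le_pow_left₀ (le_of_lt hrR) h2
      have h5 : (n:ℝ) * (r:ℝ)^2 ≤ (n:ℝ) * ((n:ℝ)-1)^2 :=
        mul_le_mul_of_nonneg_left hr2 (le_of_lt hnR0)
      nlinarith
    · exact_mod_cast hFS1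
    · -- -lam * (n-1) ≤ 1
      linarith
  · -- main case
    set B' := univ.filter fun b : ↥B => f (a0, g0, b) ≠ 0 with hB'
    have hB'card : δ1 * r ≤ (B'.card : ℝ) := by
      have hw : (fun i : Fin r => f (a0, g0, eb.symm i)) ∈ C1 := hviewB a0 g0
      have hwne : (fun i : Fin r => f (a0, g0, eb.symm i)) ≠ 0 := by
        intro hcon
        apply ht0
        have := congrFun hcon (eb b0)
        simpa using this
      have hb := hδ1 _ hw hwne
      have hcards : (univ.filter fun i : Fin r => f (a0, g0, eb.symm i) ≠ 0).card = B'.card :=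
        filter_card_equiv eb (fun b : ↥B => f (a0, g0, b) ≠ 0)
      rw [hcards] at hb
      exact hb
    -- per-b lower bound for b in B'
    have hTb : ∀ b : ↥B, b ∈ B' → δ1 * r * ((δ1 - lam) * (n:ℝ) / 2) ≤ ∑ g : G, (c b g : ℝ) := by
      intro b hb
      have hfb : f (a0, g0, b) ≠ 0 := (Finset.mem_filter.mp hb).2
      have hg0 : g0 ∈ Sb b := (hSbmem b g0).mpr ⟨a0, hfb⟩
      have hm0 : 0 < ((Sb b).card : ℝ) := by
        have : 0 < (Sb b).card := Finset.card_pos.mpr ⟨g0, hg0⟩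
        exact_mod_cast this
      -- lower: δ1 r |S| ≤ T
      have hlow : δ1 * r * ((Sb b).card : ℝ) ≤ ∑ g : G, (c b g : ℝ) := by
        calc δ1 * r * ((Sb b).card : ℝ) = ∑ g ∈ Sb b, δ1 * r := by
              rw [Finset.sum_const, nsmul_eq_mul]; ring
          _ ≤ ∑ g ∈ Sb b, (c b g : ℝ) := Finset.sum_le_sum (fun g hg => hcview b g hg)
          _ ≤ ∑ g : G, (c b g : ℝ) := Finset.sum_le_sum_of_subset_of_nonneg
              (Finset.subset_univ _) (fun g _ _ => by positivity)
      -- upper: T ≤ mixing bound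
      have hup : ∑ g : G, (c b g : ℝ)
          ≤ r * ((Sb b).card : ℝ)^2 / (n:ℝ)
            + lam * r * (((Sb b).card : ℝ) - ((Sb b).card : ℝ)^2 / (n:ℝ)) :=
        le_trans (Finset.sum_le_sum (fun g _ => hcup b g)) (hmix (Sb b))
      have hSlow : (δ1 - lam) * (n:ℝ) / 2 ≤ ((Sb b).card : ℝ) :=
        arith_sb δ1 lam (r:ℝ) _ (n:ℝ) hm0 hrR hnR0 hlam1 (le_trans hlow hup)
      calc δ1 * r * ((δ1 - lam) * (n:ℝ) / 2) ≤ δ1 * r * ((Sb b).card : ℝ) :=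
            mul_le_mul_of_nonneg_left hSlow (by positivity)
        _ ≤ ∑ g : G, (c b g : ℝ) := hlow
    -- total
    have htot : δ1 * r * (δ1 * r * ((δ1 - lam) * (n:ℝ) / 2)) ≤ (NT.card : ℝ) := by
      have hsum : (NT.card : ℝ) = ∑ b : ↥B, ∑ g : G, (c b g : ℝ) := by
        rw [hNTsum]
        push_cast
        rfl
      rw [hsum]
      have h1 : ∑ b ∈ B', (δ1 * r * ((δ1 - lam) * (n:ℝ) / 2)) ≤ ∑ b ∈ B', ∑ g : G, (c b g : ℝ) :=
        Finset.sum_le_sum (fun b hb => hTb b hb)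
      have h2 : ∑ b ∈ B', ∑ g : G, (c b g : ℝ) ≤ ∑ b : ↥B, ∑ g : G, (c b g : ℝ) :=
        Finset.sum_le_sum_of_subset_of_nonneg (Finset.subset_univ _)
          (fun b _ _ => Finset.sum_nonneg (fun g _ => by positivity))
      have h3 : ∑ b ∈ B', (δ1 * r * ((δ1 - lam) * (n:ℝ) / 2))
          = (B'.card : ℝ) * (δ1 * r * ((δ1 - lam) * (n:ℝ) / 2)) := by
        rw [Finset.sum_const, nsmul_eq_mul]
      have hterm : 0 ≤ δ1 * r * ((δ1 - lam) * (n:ℝ) / 2) := by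
        have : 0 < δ1 - lam := by linarith
        positivity
      have h4 : δ1 * r * (δ1 * r * ((δ1 - lam) * (n:ℝ) / 2))
          ≤ (B'.card : ℝ) * (δ1 * r * ((δ1 - lam) * (n:ℝ) / 2)) :=
        mul_le_mul_of_nonneg_right hB'card hterm
      linarith
    -- assemble
    refine arith_main δ1 lam _ _ (n:ℝ) (r:ℝ) hgt hδpos ?_ (Nat.cast_nonneg _) ?_
    · -- 2 * Nsq ≤ r * (n * r)
      have h1 : ((2 * (D.image φ).card : ℕ) : ℝ) ≤ ((r * (n * r) : ℕ) : ℝ) := by exact_mod_cast hP1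
      push_cast at h1
      linarith
    · -- weight chain
      have h5 : ((NT.card : ℕ) : ℝ) ≤ ((4 * FS.card : ℕ) : ℝ) := by exact_mod_cast hP2
      push_cast at h5
      linarith
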